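/- arXiv:2203.12400 — 3 statements merged into one kernel-verified Lean document; each statement's English description precedes it below -/
import Mathlib

section
/- Fix n ≥ 1, rounds t_0 ≤ t_3, an initial load vector y^{t_0} : [n] → ℕ, and two (deterministic) assignments of bins z_j^t, \tilde{z}_j^t ∈ [n] for j ∈ [n], t ∈ [t_0, t_3) that agree in all coordinates except exactly one pair (j, r). Let y^t and \tilde{y}^t be the corresponding idealized trajectories (with y^{t_0} = \tilde{y}^{t_0}) and let G_{t_0}^{t_3} and \tilde{G}_{t_0}^{t_3} be the corresponding counts of empty bin/round pairs. Then |G_{t_0}^{t_3} − \tilde{G}_{t_0}^{t_3}| ≤ 1. -/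
open Finset

/-- One round of the idealized process: one ball is removed from each non-empty bin and
exactly `n` balls are allocated, one according to each of the `n` bin choices. -/
def idealStep {n : ℕ} (y : Fin n → ℕ) (z : Fin n → Fin n) (i : Fin n) : ℕ :=
  y i - (if 0 < y i then 1 else 0) + (Finset.univ.filter fun j : Fin n => z j = i).card

/-- The idealized process trajectory started from the load vector `y0`. -/
def ideal {n : ℕ} (y0 : Fin n → ℕ) (Z : ℕ → Fin n → Fin n) : ℕ → Fin n → ℕ
  | 0 => y0
  | t + 1 => idealStep (ideal y0 Z t) (Z t)

/-- The number of empty bin/round pairs `G_{t₀}^{t₃}` of the idealized process started at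
round `t₀` from `y0`, using the bin assignment `z` (where `z t` is used in round `t`). -/
def idealEmptyPairs {n : ℕ} (t0 t3 : ℕ) (y0 : Fin n → ℕ) (z : ℕ → Fin n → Fin n) : ℕ :=
  ∑ t ∈ Finset.Icc t0 t3,
    (Finset.univ.filter fun i : Fin n =>
      ideal y0 (fun u => z (t0 + u)) (t - t0) i = 0).card

namespace IdealAux

variable {n : ℕ}

/-- the (integer-valued) number of empty bins -/
def ez (w : Fin n → ℕ) : ℤ := ∑ i, if w i = 0 then (1:ℤ) else 0

lemma card_eq_ez (w : Fin n → ℕ) :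
    ((univ.filter fun i => w i = 0).card : ℤ) = ez w := by
  rw [Finset.card_filter]
  push_cast
  rfl

lemma ez_sub_single (w w' : Fin n → ℕ) (a : Fin n)
    (he : ∀ i, i ≠ a → w i = w' i) (ha : w a = w' a + 1) :
    ez w - ez w' = -(if w' a = 0 then (1:ℤ) else 0) := by
  unfold ez
  rw [← Finset.sum_sub_distrib,
    Finset.sum_eq_single a (fun i _ hi => by rw [he i hi]; ring) (by simp)]
  simp [ha]

lemma ez_sub_pair (w w' : Fin n → ℕ) (a b : Fin n) (hab : a ≠ b)
    (he : ∀ i, i ≠ a → i ≠ b → w i = w' i) (ha : w a = w' a + 1) (hb : w' b = w b + 1) :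
    ez w - ez w' = (if w b = 0 then (1:ℤ) else 0) - (if w' a = 0 then (1:ℤ) else 0) := by
  unfold ez
  rw [← Finset.sum_sub_distrib]
  rw [← Finset.sum_subset (Finset.subset_univ ({a, b} : Finset (Fin n)))
    (fun i _ hi => by
      simp only [Finset.mem_insert, Finset.mem_singleton, not_or] at hi
      rw [he i hi.1 hi.2]; ring)]
  rw [Finset.sum_pair hab]
  simp only [ha, hb]
  simp only [Nat.succ_ne_zero, Nat.add_eq_zero, and_false, if_false]
  ring

lemma step_congr (w w' : Fin n → ℕ) (zz : Fin n → Fin n) (i : Fin n) (h : w i = w' i) :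
    idealStep w zz i = idealStep w' zz i := by
  simp only [idealStep, h]

lemma step_succ (w w' : Fin n → ℕ) (zz : Fin n → Fin n) (i : Fin n)
    (h : w i = w' i + 1) (h0 : w' i ≠ 0) :
    idealStep w zz i = idealStep w' zz i + 1 := by
  simp only [idealStep]
  split_ifs <;> omega

lemma step_heal (w w' : Fin n → ℕ) (zz : Fin n → Fin n) (i : Fin n)
    (h : w i = w' i + 1) (h0 : w' i = 0) :
    idealStep w zz i = idealStep w' zz i := by
  simp only [idealStep]
  split_ifs <;> omega

lemma count_sub (zz zz' : Fin n → Fin n) (j : Fin n)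
    (hag : ∀ j', j' ≠ j → zz j' = zz' j') (i : Fin n) :
    ((univ.filter fun j' => zz j' = i).card : ℤ)
      - ((univ.filter fun j' => zz' j' = i).card : ℤ)
    = (if zz j = i then 1 else 0) - (if zz' j = i then 1 else 0) := by
  rw [Finset.card_filter, Finset.card_filter]
  push_cast
  rw [← Finset.sum_sub_distrib,
    Finset.sum_eq_single j (fun i' _ hi' => by rw [hag i' hi']; ring) (by simp)]

lemma stepr_ne (w : Fin n → ℕ) (zz zz' : Fin n → Fin n) (j : Fin n)
    (hag : ∀ j', j' ≠ j → zz j' = zz' j') (i : Fin n) (hia : i ≠ zz j) (hib : i ≠ zz' j) :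
    idealStep w zz i = idealStep w zz' i := by
  have h := count_sub zz zz' j hag i
  rw [if_neg (fun h' => hia h'.symm), if_neg (fun h' => hib h'.symm)] at h
  simp only [idealStep]
  omega

lemma stepr_a (w : Fin n → ℕ) (zz zz' : Fin n → Fin n) (j : Fin n)
    (hne : zz j ≠ zz' j) (hag : ∀ j', j' ≠ j → zz j' = zz' j') :
    idealStep w zz (zz j) = idealStep w zz' (zz j) + 1 := by
  have h := count_sub zz zz' j hag (zz j)
  rw [if_pos rfl, if_neg (fun h' => hne h'.symm)] at h
  simp only [idealStep]
  omega

lemma stepr_b (w : Fin n → ℕ) (zz zz' : Fin n → Fin n) (j : Fin n)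
    (hne : zz j ≠ zz' j) (hag : ∀ j', j' ≠ j → zz j' = zz' j') :
    idealStep w zz' (zz' j) = idealStep w zz (zz' j) + 1 := by
  have h := count_sub zz zz' j hag (zz' j)
  rw [if_pos rfl, if_neg hne] at h
  simp only [idealStep]
  omega

end IdealAux

/-- **Lemma 4.8 (bounded differences).** If two deterministic bin assignments for the
rounds `[t₀, t₃)` agree everywhere except in exactly one coordinate `(r, j)`, then the
corresponding counts of empty bin/round pairs of the idealized process over `[t₀, t₃]`
(started from a common load vector) differ by at most `1`. -/
theorem ideal_empty_pairs_lipschitz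
    (n : ℕ) (t0 t3 : ℕ) (ht : t0 ≤ t3) (y0 : Fin n → ℕ)
    (z ztilde : ℕ → Fin n → Fin n)
    (r : ℕ) (j : Fin n) (hr0 : t0 ≤ r) (hr3 : r < t3)
    (hne : z r j ≠ ztilde r j)
    (hagree : ∀ t : ℕ, t0 ≤ t → t < t3 → ∀ j' : Fin n, (t, j') ≠ (r, j) →
      z t j' = ztilde t j') :
    |(idealEmptyPairs t0 t3 y0 z : ℤ) - (idealEmptyPairs t0 t3 y0 ztilde : ℤ)| ≤ 1 := by
  classical
  open IdealAux in
  set a : Fin n := z r j with haa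
  set b : Fin n := ztilde r j with hbb
  have hab : a ≠ b := hne
  set Y : ℕ → Fin n → ℕ := fun t => ideal y0 (fun u => z (t0 + u)) (t - t0) with hYdef
  set Y' : ℕ → Fin n → ℕ := fun t => ideal y0 (fun u => ztilde (t0 + u)) (t - t0) with hY'def
  have hYstep : ∀ t, t0 ≤ t → Y (t + 1) = idealStep (Y t) (z t) := by
    intro t htt
    show ideal y0 (fun u => z (t0 + u)) (t + 1 - t0) = _
    rw [show t + 1 - t0 = (t - t0) + 1 by omega]
    show idealStep (ideal y0 (fun u => z (t0 + u)) (t - t0)) (z (t0 + (t - t0))) = _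
    rw [show t0 + (t - t0) = t by omega]
  have hY'step : ∀ t, t0 ≤ t → Y' (t + 1) = idealStep (Y' t) (ztilde t) := by
    intro t htt
    show ideal y0 (fun u => ztilde (t0 + u)) (t + 1 - t0) = _
    rw [show t + 1 - t0 = (t - t0) + 1 by omega]
    show idealStep (ideal y0 (fun u => ztilde (t0 + u)) (t - t0)) (ztilde (t0 + (t - t0))) = _
    rw [show t0 + (t - t0) = t by omega]
  -- trajectories agree up to round r
  have heq : ∀ s, t0 ≤ s → s ≤ r → Y s = Y' s := by
    intro s hs
    induction s, hs using Nat.le_induction with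
    | base =>
      intro _
      show ideal y0 _ (t0 - t0) = ideal y0 _ (t0 - t0)
      rw [Nat.sub_self]
      rfl
    | succ s hs ih =>
      intro hsr
      have hz : z s = ztilde s := by
        funext j'
        refine hagree s hs (by omega) j' ?_
        intro hpe
        have : s = r := (Prod.mk.injEq _ _ _ _ ▸ hpe).1
        omega
      rw [hYstep s hs, hY'step s hs, ih (by omega), hz]
  set Dh : ℕ → ℤ := fun t => ∑ s ∈ Finset.Ico t0 t, (ez (Y s) - ez (Y' s)) with hDh
  have hDstep : ∀ t, t0 ≤ t → Dh (t + 1) = Dh t + (ez (Y t) - ez (Y' t)) := by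
    intro t htt
    show (∑ s ∈ Finset.Ico t0 (t + 1), _) = _
    rw [Finset.sum_Ico_succ_top htt]
  -- the invariant
  have key : ∀ t, r + 1 ≤ t → t ≤ t3 →
      (Y t = Y' t ∧ |Dh t| ≤ 1) ∨
      ((∀ i, i ≠ a → i ≠ b → Y t i = Y' t i) ∧ Y t a = Y' t a + 1 ∧
        Y' t b = Y t b + 1 ∧ Dh t = 0) ∨
      ((∀ i, i ≠ a → Y t i = Y' t i) ∧ Y t a = Y' t a + 1 ∧ Dh t = 1) ∨
      ((∀ i, i ≠ b → Y t i = Y' t i) ∧ Y' t b = Y t b + 1 ∧ Dh t = -1) := by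
    intro t ht'
    induction t, ht' using Nat.le_induction with
    | base =>
      intro _
      have hag : ∀ j', j' ≠ j → z r j' = ztilde r j' := by
        intro j' hj'
        refine hagree r hr0 hr3 j' ?_
        intro hpe
        exact hj' (Prod.mk.injEq _ _ _ _ ▸ hpe).2
      have hD : Dh (r + 1) = 0 := by
        refine Finset.sum_eq_zero fun s hs => ?_
        rw [Finset.mem_Ico] at hs
        rw [heq s hs.1 (by omega)]
        ring
      have hYr : Y (r + 1) = idealStep (Y r) (z r) := hYstep r hr0
      have hY'r : Y' (r + 1) = idealStep (Y r) (ztilde r) := by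
        rw [hY'step r hr0, heq r hr0 le_rfl]
      right; left
      refine ⟨fun i hia hib => ?_, ?_, ?_, hD⟩
      · rw [hYr, hY'r]; exact stepr_ne (Y r) (z r) (ztilde r) j hag i hia hib
      · rw [hYr, hY'r]; exact stepr_a (Y r) (z r) (ztilde r) j hne hag
      · rw [hYr, hY'r]; exact stepr_b (Y r) (z r) (ztilde r) j hne hag
    | succ t ht' ih =>
      intro h3
      have htt0 : t0 ≤ t := by omega
      have hz : z t = ztilde t := by
        funext j'
        refine hagree t htt0 (by omega) j' ?_
        intro hpe
        have : t = r := (Prod.mk.injEq _ _ _ _ ▸ hpe).1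
        omega
      have hYs : Y (t + 1) = idealStep (Y t) (z t) := hYstep t htt0
      have hY's : Y' (t + 1) = idealStep (Y' t) (z t) := by rw [hY'step t htt0, hz]
      have hD := hDstep t htt0
      rcases ih (by omega) with ⟨h1, h2⟩ | ⟨he, ha, hb, hD0⟩ | ⟨he, ha, hD1⟩ | ⟨he, hb, hD1⟩
      · -- coupled: stays coupled
        left
        constructor
        · rw [hYs, hY's, h1]
        · rw [hD, h1]; simpa using h2
      · -- two-sided discrepancy
        by_cases hA : Y' t a = 0 <;> by_cases hB : Y t b = 0
        · -- both heal
          left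
          have hd := ez_sub_pair (Y t) (Y' t) a b hab he ha hb
          rw [if_pos hB, if_pos hA] at hd
          constructor
          · funext i
            rw [hYs, hY's]
            by_cases hia : i = a
            · subst hia; exact step_heal (Y t) (Y' t) (z t) a ha hA
            · by_cases hib : i = b
              · subst hib; exact (step_heal (Y' t) (Y t) (z t) b hb hB).symm
              · exact step_congr (Y t) (Y' t) (z t) i (he i hia hib)
          · rw [hD, hD0, hd]; norm_num
        · -- a heals, b persists
          right; right; right
          have hd := ez_sub_pair (Y t) (Y' t) a b hab he ha hb
          rw [if_neg hB, if_pos hA] at hd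
          refine ⟨fun i hib => ?_, ?_, ?_⟩
          · rw [hYs, hY's]
            by_cases hia : i = a
            · subst hia; exact step_heal (Y t) (Y' t) (z t) a ha hA
            · exact step_congr (Y t) (Y' t) (z t) i (he i hia hib)
          · rw [hYs, hY's]
            exact step_succ (Y' t) (Y t) (z t) b hb hB
          · rw [hD, hD0, hd]; ring
        · -- b heals, a persists
          right; right; left
          have hd := ez_sub_pair (Y t) (Y' t) a b hab he ha hb
          rw [if_pos hB, if_neg hA] at hd
          refine ⟨fun i hia => ?_, ?_, ?_⟩
          · rw [hYs, hY's]
            by_cases hib : i = b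
            · subst hib; exact (step_heal (Y' t) (Y t) (z t) b hb hB).symm
            · exact step_congr (Y t) (Y' t) (z t) i (he i hia hib)
          · rw [hYs, hY's]
            exact step_succ (Y t) (Y' t) (z t) a ha hA
          · rw [hD, hD0, hd]; ring
        · -- neither heals
          right; left
          have hd := ez_sub_pair (Y t) (Y' t) a b hab he ha hb
          rw [if_neg hB, if_neg hA] at hd
          refine ⟨fun i hia hib => ?_, ?_, ?_, ?_⟩
          · rw [hYs, hY's]; exact step_congr (Y t) (Y' t) (z t) i (he i hia hib)
          · rw [hYs, hY's]; exact step_succ (Y t) (Y' t) (z t) a ha hA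
          · rw [hYs, hY's]; exact step_succ (Y' t) (Y t) (z t) b hb hB
          · rw [hD, hD0, hd]; ring
      · -- only a-discrepancy
        have hd := ez_sub_single (Y t) (Y' t) a he ha
        by_cases hA : Y' t a = 0
        · left
          rw [if_pos hA] at hd
          constructor
          · funext i
            rw [hYs, hY's]
            by_cases hia : i = a
            · subst hia; exact step_heal (Y t) (Y' t) (z t) a ha hA
            · exact step_congr (Y t) (Y' t) (z t) i (he i hia)
          · rw [hD, hD1, hd]; norm_num
        · right; right; left
          rw [if_neg hA] at hd
          refine ⟨fun i hia => ?_, ?_, ?_⟩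
          · rw [hYs, hY's]; exact step_congr (Y t) (Y' t) (z t) i (he i hia)
          · rw [hYs, hY's]; exact step_succ (Y t) (Y' t) (z t) a ha hA
          · rw [hD, hD1, hd]; ring
      · -- only b-discrepancy
        have hd : ez (Y t) - ez (Y' t) = (if Y t b = 0 then (1:ℤ) else 0) := by
          have := ez_sub_single (Y' t) (Y t) b (fun i hi => (he i hi).symm) hb
          linarith [this]
        by_cases hB : Y t b = 0
        · left
          rw [if_pos hB] at hd
          constructor
          · funext i
            rw [hYs, hY's]
            by_cases hib : i = b
            · subst hib; exact (step_heal (Y' t) (Y t) (z t) b hb hB).symm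
            · exact step_congr (Y t) (Y' t) (z t) i (he i hib)
          · rw [hD, hD1, hd]; norm_num
        · right; right; right
          rw [if_neg hB] at hd
          refine ⟨fun i hib => ?_, ?_, ?_⟩
          · rw [hYs, hY's]; exact step_congr (Y t) (Y' t) (z t) i (he i hib)
          · rw [hYs, hY's]; exact step_succ (Y' t) (Y t) (z t) b hb hB
          · rw [hD, hD1, hd]; ring
  -- conclude
  have hG : (idealEmptyPairs t0 t3 y0 z : ℤ) = ∑ t ∈ Finset.Icc t0 t3, ez (Y t) := by
    unfold idealEmptyPairs
    push_cast
    exact Finset.sum_congr rfl fun t _ => card_eq_ez _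
  have hG' : (idealEmptyPairs t0 t3 y0 ztilde : ℤ) = ∑ t ∈ Finset.Icc t0 t3, ez (Y' t) := by
    unfold idealEmptyPairs
    push_cast
    exact Finset.sum_congr rfl fun t _ => card_eq_ez _
  have hsplit : (idealEmptyPairs t0 t3 y0 z : ℤ) - (idealEmptyPairs t0 t3 y0 ztilde : ℤ)
      = Dh t3 + (ez (Y t3) - ez (Y' t3)) := by
    rw [hG, hG', ← Finset.Ico_add_one_right_eq_Icc, Finset.sum_Ico_succ_top ht,
      Finset.sum_Ico_succ_top ht]
    have hd : Dh t3 = ∑ s ∈ Finset.Ico t0 t3, ez (Y s)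
        - ∑ s ∈ Finset.Ico t0 t3, ez (Y' s) := Finset.sum_sub_distrib _ _
    rw [hd]
    ring
  rw [hsplit, abs_le]
  rcases key t3 (by omega) le_rfl with ⟨h1, h2⟩ | ⟨he, ha, hb, hD0⟩ | ⟨he, ha, hD1⟩ | ⟨he, hb, hD1⟩
  · rw [h1]
    rw [abs_le] at h2
    constructor <;> linarith [h2.1, h2.2]
  · have hd := ez_sub_pair (Y t3) (Y' t3) a b hab he ha hb
    rw [hD0, hd]
    constructor <;> split_ifs <;> norm_num
  · have hd := ez_sub_single (Y t3) (Y' t3) a he ha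
    rw [hD1, hd]
    constructor <;> split_ifs <;> norm_num
  · have hd : ez (Y t3) - ez (Y' t3) = (if Y t3 b = 0 then (1:ℤ) else 0) := by
      have := ez_sub_single (Y' t3) (Y t3) b (fun i hi => (he i hi).symm) hb
      linarith [this]
    rw [hD1, hd]
    constructor <;> split_ifs <;> norm_num
end

section
/- Let n ≥ 1, m ≥ n, and α := (1/(2·384·744)) · (n/m). Let x : [n] → ℕ be a load vector with Σ_{i=1}^n x_i = m, let κ := |{i ∈ [n] : x_i > 0}| and f := (n − κ)/n. Let Z_1, …, Z_κ be independent random variables, each uniformly distributed on [n], and define x'_i := x_i − 1_{x_i > 0} + Σ_{j=1}^{κ} 1_{Z_j = i}. Let Φ := Σ_{i=1}^n e^{α x_i} and Φ' := Σ_{i=1}^n e^{α x'_i}. Then E[Φ'] ≤ Φ · e^{α² − α·f} + 6n; and moreover if Φ > (48/α²) · n, then E[Φ'] ≤ Φ · e^{1.5·α² − α·f}. -/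
open MeasureTheory ProbabilityTheory Finset
open scoped ENNReal

/-- The number of non-empty bins of a load vector. -/
def kappa {n : ℕ} (x : Fin n → ℕ) : ℕ := (Finset.univ.filter fun i => 0 < x i).card

lemma exp_count_aux {Ω : Type} [MeasurableSpace Ω] {P : Measure Ω} [IsProbabilityMeasure P]
    {n K : ℕ} (W : Fin K → Ω → Fin n)
    (hmeas : ∀ j, Measurable (W j))
    (hindep : iIndepFun W P)
    (hunif : ∀ j i, P {ω | W j ω = i} = (n : ℝ≥0∞)⁻¹)
    (α : ℝ) (i : Fin n) :
    Integrable (fun ω => Real.exp (α * ((Finset.univ.filter fun j => W j ω = i).card : ℝ))) P ∧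
      ∫ ω, Real.exp (α * ((Finset.univ.filter fun j => W j ω = i).card : ℝ)) ∂P
        = (1 + (Real.exp α - 1) / n) ^ K := by
  classical
  set X : Fin K → Ω → ℝ := fun j ω => if W j ω = i then 1 else 0 with hX
  have hA : ∀ j, MeasurableSet {ω | W j ω = i} := fun j => hmeas j (measurableSet_singleton i)
  have hXmeas : ∀ j, Measurable (X j) := fun j =>
    Measurable.ite (hA j) measurable_const measurable_const
  have hXindep : iIndepFun X P :=
    hindep.comp (fun _ z => if z = i then (1 : ℝ) else 0) (fun _ => measurable_of_finite _)
  have hrepr : ∀ j, (fun ω => Real.exp (α * X j ω))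
      = fun ω => Set.indicator {ω | W j ω = i} (fun _ => Real.exp α - 1) ω + 1 := by
    intro j; funext ω
    by_cases h : W j ω = i <;> simp [X, h, Set.indicator]
  have hXint : ∀ j, Integrable (fun ω => Real.exp (α * X j ω)) P := by
    intro j; rw [hrepr j]
    exact ((integrable_const _).indicator (hA j)).add (integrable_const 1)
  have hmgf : ∀ j, mgf (X j) P α = 1 + (Real.exp α - 1) / n := by
    intro j
    simp only [mgf]
    rw [hrepr j, integral_add ((integrable_const _).indicator (hA j)) (integrable_const 1),
      integral_indicator_const _ (hA j), integral_const, measureReal_def, hunif j i]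
    simp [ENNReal.toReal_inv, measure_univ]
    ring
  have hfun : (fun ω => Real.exp (α * ((Finset.univ.filter fun j => W j ω = i).card : ℝ)))
      = fun ω => Real.exp (α * (∑ j, X j) ω) := by
    funext ω
    congr 1
    rw [Finset.card_filter]
    push_cast
    simp [X, Finset.sum_apply]
  constructor
  · rw [hfun]
    exact hXindep.integrable_exp_mul_sum hXmeas (fun j _ => hXint j)
  · rw [hfun]
    show mgf (∑ j, X j) P α = _
    rw [hXindep.mgf_sum hXmeas Finset.univ]
    simp [hmgf, Finset.prod_const]

lemma integral_phi'_eq {Ω : Type} [MeasurableSpace Ω] {P : Measure Ω} [IsProbabilityMeasure P]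
    {n : ℕ} (x : Fin n → ℕ)
    (Z : Fin (kappa x) → Ω → Fin n)
    (hmeas : ∀ j, Measurable (Z j))
    (hindep : iIndepFun Z P)
    (hunif : ∀ j i, P {ω | Z j ω = i} = (n : ℝ≥0∞)⁻¹)
    (α : ℝ) :
    ∫ ω, (∑ i, Real.exp (α * ((x i - (if 0 < x i then 1 else 0)
        + (Finset.univ.filter fun j => Z j ω = i).card : ℕ) : ℝ))) ∂P
    = (1 + (Real.exp α - 1) / n) ^ (kappa x)
        * ∑ i, Real.exp (α * ((x i - (if 0 < x i then 1 else 0) : ℕ) : ℝ)) := by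
  classical
  have key : ∀ (i : Fin n) (ω : Ω), Real.exp (α * ((x i - (if 0 < x i then 1 else 0)
      + (Finset.univ.filter fun j => Z j ω = i).card : ℕ) : ℝ))
      = Real.exp (α * ((x i - (if 0 < x i then 1 else 0) : ℕ) : ℝ))
        * Real.exp (α * ((Finset.univ.filter fun j => Z j ω = i).card : ℝ)) := by
    intro i ω
    rw [Nat.cast_add, mul_add, Real.exp_add]
  simp_rw [key]
  rw [integral_finset_sum _
    (fun i _ => ((exp_count_aux Z hmeas hindep hunif α i).1).const_mul _)]
  rw [Finset.mul_sum]
  refine Finset.sum_congr rfl fun i _ => ?_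
  rw [integral_const_mul, (exp_count_aux Z hmeas hindep hunif α i).2]
  ring

set_option maxHeartbeats 1000000 in
/-- **Lemma 4.10 (exponential potential drop).** Let `x : [n] → ℕ` be a load vector with
`m ≥ n` balls, `κ` non-empty bins, fraction `f := (n-κ)/n` of empty bins, and let
`α := (1/(2·384·744))·(n/m)`. If one ball is removed from each non-empty bin and
re-allocated to a bin chosen independently and uniformly at random, then
`E[Φ'] ≤ Φ·e^{α² - α·f} + 6n`; moreover, if `Φ > (48/α²)·n`, then
`E[Φ'] ≤ Φ·e^{1.5·α² - α·f}`. -/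
theorem rbb_exp_potential_drop
    (n m : ℕ) (hn : 1 ≤ n) (hm : n ≤ m)
    (x : Fin n → ℕ) (hx : (∑ i, x i) = m)
    (Ω : Type) [MeasurableSpace Ω] (P : Measure Ω) [IsProbabilityMeasure P]
    (Z : Fin (kappa x) → Ω → Fin n)
    (hmeas : ∀ j, Measurable (Z j))
    (hindep : iIndepFun Z P)
    (hunif : ∀ j i, P {ω | Z j ω = i} = (n : ℝ≥0∞)⁻¹) :
    (let α : ℝ := (1 / (2 * 384 * 744)) * ((n : ℝ) / m)
     let f : ℝ := ((n - kappa x : ℕ) : ℝ) / n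
     let Φ : ℝ := ∑ i, Real.exp (α * (x i : ℝ))
     let Φ' : Ω → ℝ := fun ω => ∑ i, Real.exp (α * ((x i - (if 0 < x i then 1 else 0)
        + (Finset.univ.filter fun j => Z j ω = i).card : ℕ) : ℝ))
     (∫ ω, Φ' ω ∂P) ≤ Φ * Real.exp (α ^ 2 - α * f) + 6 * n
       ∧ ((48 / α ^ 2) * n < Φ →
            (∫ ω, Φ' ω ∂P) ≤ Φ * Real.exp (1.5 * α ^ 2 - α * f))) := by
  classical
  intro α f Φ Φ'
  have hαdef : α = (1 / (2 * 384 * 744)) * ((n : ℝ) / m) := rfl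
  have hfdef : f = ((n - kappa x : ℕ) : ℝ) / n := rfl
  have hΦdef : Φ = ∑ i, Real.exp (α * (x i : ℝ)) := rfl
  have hΦ'def : Φ' = fun ω => ∑ i, Real.exp (α * ((x i - (if 0 < x i then 1 else 0)
      + (Finset.univ.filter fun j => Z j ω = i).card : ℕ) : ℝ)) := rfl
  -- basic numerics
  have hn0 : (0 : ℝ) < n := by exact_mod_cast hn
  have hm0 : (0 : ℝ) < m := by
    have : 1 ≤ m := le_trans hn hm
    exact_mod_cast Nat.lt_of_lt_of_le Nat.zero_lt_one this
  have hnm : (n : ℝ) / m ≤ 1 := by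
    rw [div_le_one hm0]; exact_mod_cast hm
  have hαpos : 0 < α := by
    rw [hαdef]; positivity
  have hαle : α ≤ 1 / 2 := by
    rw [hαdef]
    nlinarith [div_pos hn0 hm0]
  -- kappa bounds
  have hκnat : kappa x ≤ n := by
    have := Finset.card_filter_le (Finset.univ : Finset (Fin n)) (fun i => 0 < x i)
    simpa [kappa] using this
  set D : ℝ := ((n - kappa x : ℕ) : ℝ) with hDdef
  have hDeq : D = (n : ℝ) - kappa x := by
    rw [hDdef, Nat.cast_sub hκnat]
  have hD0 : 0 ≤ D := Nat.cast_nonneg _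
  have hDn : D ≤ n := by
    rw [hDeq]
    have : (0:ℝ) ≤ (kappa x : ℝ) := Nat.cast_nonneg _
    linarith
  have hf0 : 0 ≤ f := by rw [hfdef]; positivity
  have hf1 : f ≤ 1 := by
    rw [hfdef]
    exact (div_le_one hn0).mpr hDn
  have hfD : f = D / n := rfl
  -- sum splits
  set E : ℝ := ∑ i ∈ Finset.univ.filter (fun i => 0 < x i), Real.exp (α * (x i : ℝ)) with hEdef
  have hE0 : 0 ≤ E := Finset.sum_nonneg fun _ _ => (Real.exp_pos _).le
  have hcardneg : ((Finset.univ.filter fun i => ¬ 0 < x i).card : ℝ) = D := by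
    have h := Finset.card_filter_add_card_filter_not
      (s := (Finset.univ : Finset (Fin n))) (p := fun i => 0 < x i)
    have hcu : (Finset.univ : Finset (Fin n)).card = n := by simp
    have : (Finset.univ.filter fun i => ¬ 0 < x i).card = n - kappa x := by
      rw [hcu] at h
      have : kappa x = (Finset.univ.filter fun i => 0 < x i).card := rfl
      omega
    rw [this, hDdef]
  have hΦsplit : Φ = E + D := by
    rw [hΦdef, ← Finset.sum_filter_add_sum_filter_not Finset.univ (fun i => 0 < x i), ← hEdef]
    congr 1
    have h1 : ∀ i ∈ Finset.univ.filter (fun i => ¬ 0 < x i),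
        Real.exp (α * (x i : ℝ)) = 1 := by
      intro i hi
      have hx0 : x i = 0 := by
        have := (Finset.mem_filter.mp hi).2; omega
      simp [hx0]
    rw [Finset.sum_congr rfl h1, Finset.sum_const, nsmul_eq_mul, mul_one, hcardneg]
  have hSsplit : (∑ i, Real.exp (α * ((x i - (if 0 < x i then 1 else 0) : ℕ) : ℝ)))
      = Real.exp (-α) * E + D := by
    rw [← Finset.sum_filter_add_sum_filter_not Finset.univ (fun i => 0 < x i)]
    congr 1
    · rw [hEdef, Finset.mul_sum]
      refine Finset.sum_congr rfl fun i hi => ?_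
      have hxi : 0 < x i := (Finset.mem_filter.mp hi).2
      rw [if_pos hxi, Nat.cast_sub (by omega : 1 ≤ x i), ← Real.exp_add]
      congr 1
      push_cast
      ring
    · have h1 : ∀ i ∈ Finset.univ.filter (fun i => ¬ 0 < x i),
          Real.exp (α * ((x i - (if 0 < x i then 1 else 0) : ℕ) : ℝ)) = 1 := by
        intro i hi
        have hx0 : x i = 0 := by
          have := (Finset.mem_filter.mp hi).2; omega
        simp [hx0]
      rw [Finset.sum_congr rfl h1, Finset.sum_const, nsmul_eq_mul, mul_one, hcardneg]
  -- the integral identity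
  have hI : (∫ ω, Φ' ω ∂P)
      = (1 + (Real.exp α - 1) / n) ^ (kappa x) * (Real.exp (-α) * E + D) := by
    simp only [hΦ'def]
    rw [integral_phi'_eq x Z hmeas hindep hunif α, hSsplit]
  -- bound on the power factor
  have hu0 : α ≤ Real.exp α - 1 := by
    have := Real.add_one_le_exp α; linarith
  have hq : Real.exp α - 1 ≤ α + α ^ 2 := by
    have h2 := Real.exp_bound' hαpos.le (by linarith : α ≤ 1) (n := 2) (by norm_num)
    have hs : (∑ j ∈ Finset.range 2, α ^ j / (Nat.factorial j)) = 1 + α := by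
      simp [Finset.sum_range_succ, Nat.factorial]
    rw [hs] at h2
    norm_num [Nat.factorial] at h2
    nlinarith [sq_nonneg α]
  have hR0 : (0:ℝ) ≤ 1 + (Real.exp α - 1) / n := by
    have h1 : 0 ≤ Real.exp α - 1 := le_trans hαpos.le hu0
    have : 0 ≤ (Real.exp α - 1) / n := div_nonneg h1 hn0.le
    linarith
  have hκdiv : (kappa x : ℝ) / n = 1 - f := by
    rw [hfD]
    have : (kappa x : ℝ) = n - D := by rw [hDeq]; ring
    rw [this]
    field_simp
  have hRpow : (1 + (Real.exp α - 1) / n) ^ (kappa x) ≤ Real.exp (α + α ^ 2 - α * f) := by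
    have h1 : 1 + (Real.exp α - 1) / n ≤ Real.exp ((Real.exp α - 1) / n) := by
      have := Real.add_one_le_exp ((Real.exp α - 1) / n); linarith
    calc (1 + (Real.exp α - 1) / n) ^ (kappa x)
        ≤ (Real.exp ((Real.exp α - 1) / n)) ^ (kappa x) := pow_le_pow_left₀ hR0 h1 _
      _ = Real.exp ((kappa x : ℝ) * ((Real.exp α - 1) / n)) := (Real.exp_nat_mul _ _).symm
      _ ≤ Real.exp (α + α ^ 2 - α * f) := by
          apply Real.exp_le_exp.mpr
          have heq : (kappa x : ℝ) * ((Real.exp α - 1) / n)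
              = (1 - f) * (Real.exp α - 1) := by
            rw [show (kappa x : ℝ) * ((Real.exp α - 1) / n)
                = ((kappa x : ℝ) / n) * (Real.exp α - 1) by ring, hκdiv]
          rw [heq]
          nlinarith [mul_nonneg hf0 (sq_nonneg α),
            mul_le_mul_of_nonneg_left hq (by linarith : (0:ℝ) ≤ 1 - f),
            mul_le_mul_of_nonneg_left hu0 hf0]
  have hexp3 : Real.exp (α + α ^ 2 - α * f) ≤ 3 := by
    have h1 : α + α ^ 2 - α * f ≤ 1 := by nlinarith [mul_nonneg hαpos.le hf0]
    calc Real.exp (α + α ^ 2 - α * f) ≤ Real.exp 1 := Real.exp_le_exp.mpr h1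
      _ ≤ 3 := (Real.exp_one_lt_d9.trans (by norm_num)).le
  set G : ℝ := Real.exp (α ^ 2 - α * f) with hGdef
  set H : ℝ := Real.exp (α + α ^ 2 - α * f) with hHdef
  have hG0 : 0 < G := Real.exp_pos _
  have hHG : H * Real.exp (-α) = G := by
    rw [hHdef, hGdef, ← Real.exp_add]
    ring_nf
  have hmain : (∫ ω, Φ' ω ∂P) ≤ G * E + H * D := by
    rw [hI]
    have hinner : 0 ≤ Real.exp (-α) * E + D := by positivity
    calc (1 + (Real.exp α - 1) / n) ^ (kappa x) * (Real.exp (-α) * E + D)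
        ≤ H * (Real.exp (-α) * E + D) := mul_le_mul_of_nonneg_right hRpow hinner
      _ = (H * Real.exp (-α)) * E + H * D := by ring
      _ = G * E + H * D := by rw [hHG]
  have hHD : H * D ≤ 3 * n := by
    have h1 : H * D ≤ 3 * D := mul_le_mul_of_nonneg_right hexp3 hD0
    linarith
  have hGD : 0 ≤ G * D := mul_nonneg hG0.le hD0
  constructor
  · -- first claim
    have hΦG : Φ * G = G * E + G * D := by rw [hΦsplit]; ring
    linarith
  · -- second claim
    intro hbig
    have hΦ0 : 0 ≤ Φ := by rw [hΦsplit]; linarith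
    set e₂ : ℝ := Real.exp (0.5 * α ^ 2) with he₂def
    have h2 : Real.exp (1.5 * α ^ 2 - α * f) = G * e₂ := by
      rw [hGdef, he₂def, ← Real.exp_add]
      ring_nf
    have he₂1 : 0.5 * α ^ 2 + 1 ≤ e₂ := by
      have := Real.add_one_le_exp (0.5 * α ^ 2); linarith
    have hGhalf : 1 / 2 ≤ G := by
      have h3 : -α ≤ α ^ 2 - α * f := by
        nlinarith [mul_nonneg hαpos.le hf0, sq_nonneg α,
          mul_le_mul_of_nonneg_left hf1 hαpos.le]
      have h4 : Real.exp (-α) ≤ G := Real.exp_le_exp.mpr h3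
      have h5 : 1 - α ≤ Real.exp (-α) := Real.one_sub_le_exp_neg α
      linarith
    have h12 : 12 * n ≤ Φ * (G * (e₂ - 1)) := by
      have hα2 : (0:ℝ) < α ^ 2 := by positivity
      have hstep : α ^ 2 / 4 ≤ G * (e₂ - 1) := by
        have := mul_le_mul hGhalf (by linarith : 0.5 * α ^ 2 ≤ e₂ - 1)
          (by positivity) hG0.le
        linarith
      calc (12 : ℝ) * n = (48 / α ^ 2 * n) * (α ^ 2 / 4) := by
            field_simp
            ring
        _ ≤ Φ * (α ^ 2 / 4) := mul_le_mul_of_nonneg_right hbig.le (by positivity)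
        _ ≤ Φ * (G * (e₂ - 1)) := mul_le_mul_of_nonneg_left hstep hΦ0
    have hup : (∫ ω, Φ' ω ∂P) ≤ G * E + G * D + Φ * (G * (e₂ - 1)) := by
      linarith
    have hfin : Φ * (G * e₂) = G * E + G * D + Φ * (G * (e₂ - 1)) := by
      rw [hΦsplit]; ring
    rw [h2]
    linarith [hup, hfin]
end

section
/- Let Z_1, …, Z_n be independent random variables, each uniformly distributed on [n] = {1,…,n}, and define the load of bin i as x_i := |{j ∈ [n] : Z_j = i}| and the quadratic potential Υ := Σ_{i=1}^n x_i². Then for every constant c > 0 there exists n_0 such that for all n ≥ n_0, the probability that Υ ≤ 3n is at least 1 − n^{−c}. -/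
open MeasureTheory ProbabilityTheory Finset
open scoped ENNReal

namespace OC
variable {n m : ℕ}
def load (f : Fin m → Fin n) (i : Fin n) : ℕ := (univ.filter fun j => f j = i).card
def bc (f : Fin m → Fin n) (j : Fin m) : ℕ :=
  (univ.filter fun k : Fin m => (j : ℕ) < (k : ℕ) ∧ f k = f j).card
def B (f : Fin m → Fin n) : ℕ := ∑ j, bc f j

lemma sum_load (f : Fin m → Fin n) : ∑ i, load f i = m := by
  classical
  have h := Finset.card_eq_sum_card_fiberwise (f := f) (s := univ) (t := univ)
    (fun x _ => mem_univ (f x))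
  simpa [load, card_univ] using h.symm

lemma upsilon_eq (f : Fin m → Fin n) : ∑ i, (load f i)^2 = m + 2 * B f := by
  classical
  have h1 : ∑ i, (load f i)^2 = ∑ j : Fin m, load f (f j) := by
    rw [← Finset.sum_fiberwise_of_maps_to (g := f) (t := (univ : Finset (Fin n)))
      (fun x _ => mem_univ (f x)) (fun j => load f (f j))]
    refine Finset.sum_congr rfl fun i _ => ?_
    rw [sq]
    rw [Finset.sum_congr rfl (fun j hj => by rw [(Finset.mem_filter.mp hj).2])]
    simp [load, mul_comm]
  have key : ∀ k j : Fin m, (if f k = f j then (1:ℕ) else 0) =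
      ((if k = j then (1:ℕ) else 0) + (if (j:ℕ) < (k:ℕ) ∧ f k = f j then 1 else 0))
        + (if (k:ℕ) < (j:ℕ) ∧ f k = f j then 1 else 0) := by
    intro k j
    by_cases heq : f k = f j
    · rcases lt_trichotomy (k : ℕ) (j : ℕ) with h | h | h
      · have hkj : k ≠ j := fun e => by simp [e] at h
        simp [heq, h, hkj, Nat.lt_asymm h]
      · have hkj : k = j := Fin.ext h
        simp [heq, hkj]
      · have hkj : k ≠ j := fun e => by simp [e] at h
        simp [heq, h, hkj, Nat.lt_asymm h]
    · have hkj : k ≠ j := fun e => heq (by rw [e])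
      simp [heq, hkj]
  have h2 : ∀ j : Fin m, load f (f j) =
      (1 + bc f j) + (univ.filter fun k : Fin m => (k : ℕ) < (j : ℕ) ∧ f k = f j).card := by
    intro j
    rw [load, Finset.card_filter, bc, Finset.card_filter, Finset.card_filter]
    rw [Finset.sum_congr rfl (fun k _ => key k j)]
    rw [Finset.sum_add_distrib, Finset.sum_add_distrib]
    simp
  have h3 : (∑ j : Fin m, (univ.filter fun k : Fin m => (k : ℕ) < (j : ℕ) ∧ f k = f j).card)
      = B f := by
    unfold B bc
    simp only [Finset.card_filter]
    rw [Finset.sum_comm]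
    refine Finset.sum_congr rfl fun j _ => Finset.sum_congr rfl fun k _ => ?_
    congr 1
    simp only [eq_iff_iff]
    constructor
    · rintro ⟨h, he⟩; exact ⟨h, he.symm⟩
    · rintro ⟨h, he⟩; exact ⟨h, he.symm⟩
  rw [h1, Finset.sum_congr rfl (fun j _ => h2 j), Finset.sum_add_distrib, h3,
    Finset.sum_add_distrib]
  simp [B, two_mul, card_univ]
  ring
end OC

namespace OC
variable {n m : ℕ}
lemma bc_cons_zero (g : Fin m → Fin n) (v : Fin n) :
    bc (Fin.cons v g) 0 = load g v := by
  rw [bc, load, Finset.card_filter, Finset.card_filter, Fin.sum_univ_succ]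
  simp

lemma bc_cons_succ (g : Fin m → Fin n) (v : Fin n) (j : Fin m) :
    bc (Fin.cons v g) j.succ = bc g j := by
  rw [bc, bc, Finset.card_filter, Finset.card_filter, Fin.sum_univ_succ]
  simp [Nat.succ_lt_succ_iff]

def Smin (L : ℕ) (f : Fin m → Fin n) : ℕ := ∑ j, min (bc f j) L

lemma Smin_cons (L : ℕ) (g : Fin m → Fin n) (v : Fin n) :
    Smin L (Fin.cons v g) = min (load g v) L + Smin L g := by
  rw [Smin, Fin.sum_univ_succ]
  simp [Smin, bc_cons_zero, bc_cons_succ]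

end OC

namespace OC
variable {n m : ℕ}

lemma exp_min_le {t : ℝ} (ht : 0 ≤ t) {L : ℕ} (hL : 1 ≤ L) (x : ℕ) :
    Real.exp (t * min x L) ≤ 1 + (Real.exp (t * L) - 1) / L * x := by
  have hL0 : (0:ℝ) < L := by exact_mod_cast hL
  have ha : 0 ≤ (Real.exp (t * L) - 1) / L := by
    apply div_nonneg _ hL0.le
    have : (1:ℝ) ≤ Real.exp (t * L) := by
      rw [← Real.exp_zero]
      exact Real.exp_le_exp.mpr (by positivity)
    linarith
  set y : ℕ := min x L with hy
  have hyL : (y:ℝ) ≤ L := by exact_mod_cast Nat.min_le_right x L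
  have hyx : (y:ℝ) ≤ x := by exact_mod_cast Nat.min_le_left x L
  have hy0 : (0:ℝ) ≤ y := Nat.cast_nonneg y
  set θ : ℝ := (y:ℝ) / L with hθ
  have hθ0 : 0 ≤ θ := div_nonneg hy0 hL0.le
  have hθ1 : θ ≤ 1 := by rw [hθ, div_le_one hL0]; exact hyL
  have hcx := convexOn_exp.2 (Set.mem_univ (0:ℝ)) (Set.mem_univ (t * L))
    (by linarith : (0:ℝ) ≤ 1 - θ) hθ0 (by ring)
  have hpt : (1 - θ) • (0:ℝ) + θ • (t * L) = t * y := by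
    simp only [smul_eq_mul]
    field_simp [hθ]
    rw [hθ, mul_zero, zero_add, div_mul_eq_mul_div, div_mul_eq_mul_div, div_eq_iff hL0.ne']
    ring
  rw [hpt] at hcx
  have : Real.exp (t * y) ≤ 1 + (Real.exp (t * L) - 1) / L * y := by
    calc Real.exp (t * y) ≤ (1 - θ) * Real.exp 0 + θ * Real.exp (t * L) := hcx
      _ = 1 + θ * (Real.exp (t * L) - 1) := by rw [Real.exp_zero]; ring
      _ = 1 + (Real.exp (t * L) - 1) / L * y := by rw [hθ]; ring
  refine this.trans ?_
  have := mul_le_mul_of_nonneg_left hyx ha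
  linarith

lemma sum_exp_load_le {t : ℝ} (ht : 0 ≤ t) {L : ℕ} (hL : 1 ≤ L) (g : Fin m → Fin n) :
    ∑ v : Fin n, Real.exp (t * min (load g v) L)
      ≤ n + (Real.exp (t * L) - 1) / L * m := by
  have h1 : ∀ v, Real.exp (t * min (load g v) L)
      ≤ 1 + (Real.exp (t * L) - 1) / L * (load g v) := fun v => exp_min_le ht hL _
  calc ∑ v : Fin n, Real.exp (t * min (load g v) L)
      ≤ ∑ v : Fin n, (1 + (Real.exp (t * L) - 1) / L * (load g v)) :=
        Finset.sum_le_sum fun v _ => h1 v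
    _ = n + (Real.exp (t * L) - 1) / L * m := by
        rw [Finset.sum_add_distrib, ← Finset.mul_sum]
        have : ∑ v : Fin n, ((load g v : ℝ)) = m := by
          rw [← Nat.cast_sum]
          exact_mod_cast congrArg (fun k : ℕ => (k : ℝ)) (sum_load g)
        simp [this, card_univ]

lemma sumW_le {t : ℝ} (ht : 0 ≤ t) {L : ℕ} (hL : 1 ≤ L) :
    ∀ m, ∑ f : Fin m → Fin n, Real.exp (t * Smin L f)
      ≤ ∏ j ∈ Finset.range m, ((n:ℝ) + (Real.exp (t * L) - 1) / L * j) := by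
  intro m
  induction m with
  | zero => simp [Smin]
  | succ m ih =>
    set a : ℝ := (Real.exp (t * L) - 1) / L with ha
    have ha0 : 0 ≤ a := by
      apply div_nonneg _ (by positivity)
      have : (1:ℝ) ≤ Real.exp (t * L) := by
        rw [← Real.exp_zero]; exact Real.exp_le_exp.mpr (by positivity)
      linarith
    have hsum : ∑ f : Fin (m+1) → Fin n, Real.exp (t * Smin L f)
        = ∑ p : Fin n × (Fin m → Fin n), Real.exp (t * Smin L (Fin.cons p.1 p.2)) := by
      rw [← Equiv.sum_comp (Fin.consEquiv fun _ => Fin n)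
        (fun f => Real.exp (t * Smin L f))]
      rfl
    rw [hsum, Fintype.sum_prod_type_right]
    have hterm : ∀ g : Fin m → Fin n,
        ∑ v : Fin n, Real.exp (t * Smin L (Fin.cons v g))
          ≤ ((n:ℝ) + a * m) * Real.exp (t * Smin L g) := by
      intro g
      have : ∀ v : Fin n, Real.exp (t * Smin L (Fin.cons v g))
          = Real.exp (t * min (load g v) L) * Real.exp (t * Smin L g) := by
        intro v
        rw [Smin_cons, ← Real.exp_add]
        congr 1
        push_cast
        ring
      rw [Finset.sum_congr rfl fun v _ => this v, ← Finset.sum_mul]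
      exact mul_le_mul_of_nonneg_right (sum_exp_load_le ht hL g) (Real.exp_nonneg _)
    calc ∑ g : Fin m → Fin n, ∑ v : Fin n, Real.exp (t * Smin L (Fin.cons v g))
        ≤ ∑ g : Fin m → Fin n, ((n:ℝ) + a * m) * Real.exp (t * Smin L g) :=
          Finset.sum_le_sum fun g _ => hterm g
      _ = ((n:ℝ) + a * m) * ∑ g : Fin m → Fin n, Real.exp (t * Smin L g) := by
          rw [Finset.mul_sum]
      _ ≤ ((n:ℝ) + a * m) * ∏ j ∈ Finset.range m, ((n:ℝ) + a * j) := by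
          apply mul_le_mul_of_nonneg_left ih
          positivity
      _ = ∏ j ∈ Finset.range (m+1), ((n:ℝ) + a * j) := by
          rw [Finset.prod_range_succ]; ring

end OC

namespace OC
variable {n : ℕ}
lemma card_fix (T : Finset (Fin n)) (i : Fin n) :
    (univ.filter fun f : Fin n → Fin n => ∀ j ∈ T, f j = i).card = n ^ (n - T.card) := by
  classical
  rw [← Fintype.card_subtype]
  have e : {f : Fin n → Fin n // ∀ j ∈ T, f j = i} ≃ ((↥(Tᶜ : Finset (Fin n))) → Fin n) :=
    { toFun := fun f j => f.1 j.1
      invFun := fun g => ⟨fun j => if h : j ∈ T then i else g ⟨j, by exact Finset.mem_compl.mpr h⟩,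
        fun j hj => dif_pos hj⟩
      left_inv := by
        rintro ⟨f, hf⟩
        ext j
        by_cases h : j ∈ T
        · simp [dif_pos h, hf j h]
        · simp [dif_neg h]
      right_inv := by
        intro g
        funext j
        have : (j : Fin n) ∉ T := Finset.mem_compl.mp (by exact_mod_cast j.2)
        simp [dif_neg this] }
  rw [Fintype.card_congr e, Fintype.card_fun]
  congr 1
  · simp
  · rw [Fintype.card_coe, Finset.card_compl, Fintype.card_fin]

lemma card_load_ge (i : Fin n) (K : ℕ) :
    (univ.filter fun f : Fin n → Fin n => K ≤ load f i).card
      ≤ n.choose K * n ^ (n - K) := by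
  classical
  have hsub : (univ.filter fun f : Fin n → Fin n => K ≤ load f i)
      ⊆ (Finset.powersetCard K (univ : Finset (Fin n))).biUnion
          (fun T => univ.filter fun f : Fin n → Fin n => ∀ j ∈ T, f j = i) := by
    intro f hf
    have hK : K ≤ (univ.filter fun j => f j = i).card := (Finset.mem_filter.mp hf).2
    obtain ⟨T, hTsub, hTcard⟩ := Finset.exists_subset_card_eq hK
    refine Finset.mem_biUnion.mpr ⟨T, ?_, ?_⟩
    · exact Finset.mem_powersetCard.mpr ⟨Finset.subset_univ T, hTcard⟩
    · refine Finset.mem_filter.mpr ⟨mem_univ f, fun j hj => ?_⟩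
      exact (Finset.mem_filter.mp (hTsub hj)).2
  calc (univ.filter fun f : Fin n → Fin n => K ≤ load f i).card
      ≤ _ := Finset.card_le_card hsub
    _ ≤ ∑ T ∈ Finset.powersetCard K (univ : Finset (Fin n)),
          (univ.filter fun f : Fin n → Fin n => ∀ j ∈ T, f j = i).card :=
        Finset.card_biUnion_le
    _ = ∑ T ∈ Finset.powersetCard K (univ : Finset (Fin n)), n ^ (n - K) := by
        refine Finset.sum_congr rfl fun T hT => ?_
        rw [card_fix, (Finset.mem_powersetCard.mp hT).2]
    _ = n.choose K * n ^ (n - K) := by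
        rw [Finset.sum_const, Finset.card_powersetCard, Finset.card_univ, Fintype.card_fin,
          smul_eq_mul]

lemma card_maxload (K : ℕ) :
    (univ.filter fun f : Fin n → Fin n => ∃ i, K ≤ load f i).card
      ≤ n * (n.choose K * n ^ (n - K)) := by
  classical
  have hsub : (univ.filter fun f : Fin n → Fin n => ∃ i, K ≤ load f i)
      ⊆ (univ : Finset (Fin n)).biUnion
          (fun i => univ.filter fun f : Fin n → Fin n => K ≤ load f i) := by
    intro f hf
    obtain ⟨i, hi⟩ := (Finset.mem_filter.mp hf).2
    exact Finset.mem_biUnion.mpr ⟨i, mem_univ i, Finset.mem_filter.mpr ⟨mem_univ f, hi⟩⟩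
  calc _ ≤ _ := Finset.card_le_card hsub
    _ ≤ ∑ i : Fin n, (univ.filter fun f : Fin n → Fin n => K ≤ load f i).card :=
        Finset.card_biUnion_le
    _ ≤ ∑ _i : Fin n, n.choose K * n ^ (n - K) :=
        Finset.sum_le_sum fun i _ => card_load_ge i K
    _ = n * (n.choose K * n ^ (n - K)) := by simp [card_univ, mul_comm]
end OC


namespace OC
variable {n : ℕ}

lemma bc_lt_load {m : ℕ} (f : Fin m → Fin n) (j : Fin m) : bc f j < load f (f j) := by
  apply Finset.card_lt_card
  constructor
  · intro k hk
    exact Finset.mem_filter.mpr ⟨mem_univ k, (Finset.mem_filter.mp hk).2.2⟩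
  · intro hsub
    have hj : j ∈ univ.filter fun k => f k = f j := Finset.mem_filter.mpr ⟨mem_univ j, rfl⟩
    have h := (Finset.mem_filter.mp (hsub hj)).2.1
    exact Nat.lt_irrefl _ h

lemma bad_subset (L : ℕ) :
    (univ.filter fun f : Fin n → Fin n => 3 * n < ∑ i, (load f i)^2)
      ⊆ (univ.filter fun f : Fin n → Fin n => n ≤ Smin L f)
        ∪ (univ.filter fun f : Fin n → Fin n => ∃ i, L + 1 ≤ load f i) := by
  intro f hf
  classical
  by_cases hM : ∃ i, L + 1 ≤ load f i
  · exact Finset.mem_union_right _ (Finset.mem_filter.mpr ⟨mem_univ f, hM⟩)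
  · push_neg at hM
    refine Finset.mem_union_left _ (Finset.mem_filter.mpr ⟨mem_univ f, ?_⟩)
    have hbc : ∀ j, bc f j ≤ L := by
      intro j
      have h1 := bc_lt_load f j
      have h2 : load f (f j) ≤ L := Nat.lt_succ_iff.mp (hM (f j))
      omega
    have hS : Smin L f = B f := by
      unfold Smin B
      exact Finset.sum_congr rfl fun j _ => Nat.min_eq_left (hbc j)
    have hf2 : 3 * n < ∑ i, (load f i)^2 := (Finset.mem_filter.mp hf).2
    rw [upsilon_eq f] at hf2
    rw [hS]
    omega

lemma prod_bound {a : ℝ} (ha : 0 ≤ a) (hn : 1 ≤ n) :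
    ∏ j ∈ Finset.range n, ((n:ℝ) + a * j) ≤ (n:ℝ)^n * Real.exp (a * n / 2) := by
  have hn0 : (0:ℝ) < n := by exact_mod_cast hn
  have hfac : ∀ j ∈ Finset.range n, (n:ℝ) + a * j ≤ (n:ℝ) * Real.exp (a * j / n) := by
    intro j _
    calc (n:ℝ) + a * j = (n:ℝ) * (1 + a * j / n) := by field_simp
      _ ≤ (n:ℝ) * Real.exp (a * j / n) := by
          apply mul_le_mul_of_nonneg_left _ hn0.le
          have := Real.add_one_le_exp (a * (j:ℝ) / n)
          linarith
  calc ∏ j ∈ Finset.range n, ((n:ℝ) + a * j)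
      ≤ ∏ j ∈ Finset.range n, ((n:ℝ) * Real.exp (a * j / n)) := by
        apply Finset.prod_le_prod _ hfac
        intro j _
        positivity
    _ = (n:ℝ)^n * Real.exp (∑ j ∈ Finset.range n, a * j / n) := by
        rw [Finset.prod_mul_distrib, Finset.prod_const, Real.exp_sum, Finset.card_range]
    _ ≤ (n:ℝ)^n * Real.exp (a * n / 2) := by
        apply mul_le_mul_of_nonneg_left _ (by positivity)
        apply Real.exp_le_exp.mpr
        have hsum : ∑ j ∈ Finset.range n, (j:ℝ) ≤ n * n / 2 := by
          have h2 := Finset.sum_range_id_mul_two n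
          have : ((∑ j ∈ Finset.range n, j : ℕ) : ℝ) * 2 = (n:ℝ) * ((n:ℝ) - 1) := by
            rw [← Nat.cast_ofNat, ← Nat.cast_mul, h2, Nat.cast_mul, Nat.cast_sub hn]
            push_cast
            ring
          push_cast at this ⊢
          nlinarith [hn0]
        calc ∑ j ∈ Finset.range n, a * (j:ℝ) / n = a / n * ∑ j ∈ Finset.range n, (j:ℝ) := by
              rw [Finset.mul_sum]; exact Finset.sum_congr rfl fun j _ => by ring
          _ ≤ a / n * (n * n / 2) := by
              apply mul_le_mul_of_nonneg_left hsum (by positivity)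
          _ = a * n / 2 := by field_simp

lemma chernoff_card {t : ℝ} (ht : 0 ≤ t) {L : ℕ} (hL : 1 ≤ L) (s : ℕ) :
    ((univ.filter fun f : Fin n → Fin n => s ≤ Smin L f).card : ℝ) * Real.exp (t * s)
      ≤ ∏ j ∈ Finset.range n, ((n:ℝ) + (Real.exp (t * L) - 1) / L * j) := by
  have h1 : ((univ.filter fun f : Fin n → Fin n => s ≤ Smin L f).card : ℝ) * Real.exp (t * s)
      = ∑ f ∈ univ.filter fun f : Fin n → Fin n => s ≤ Smin L f, Real.exp (t * s) := by
    rw [Finset.sum_const, nsmul_eq_mul]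
  rw [h1]
  calc ∑ f ∈ univ.filter fun f : Fin n → Fin n => s ≤ Smin L f, Real.exp (t * s)
      ≤ ∑ f ∈ univ.filter fun f : Fin n → Fin n => s ≤ Smin L f, Real.exp (t * Smin L f) := by
        apply Finset.sum_le_sum
        intro f hf
        apply Real.exp_le_exp.mpr
        apply mul_le_mul_of_nonneg_left _ ht
        exact_mod_cast (Finset.mem_filter.mp hf).2
    _ ≤ ∑ f : Fin n → Fin n, Real.exp (t * Smin L f) := by
        apply Finset.sum_le_sum_of_subset_of_nonneg (Finset.filter_subset _ _)
        intro f _ _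
        positivity
    _ ≤ _ := sumW_le ht hL n

end OC

namespace OC

lemma count_bad {n L : ℕ} (hL : 1 ≤ L) (hLn : L + 1 ≤ n) :
    ((univ.filter fun f : Fin n → Fin n => 3 * n < ∑ i, (load f i)^2).card : ℝ)
      ≤ (n:ℝ)^n * Real.exp (-(Real.log 2 - 1/2) * n / L)
        + (n:ℝ)^(n+1) / (Nat.factorial (L+1)) := by
  classical
  have hn : 1 ≤ n := le_trans (by omega) hLn
  have hn0 : (0:ℝ) < n := by exact_mod_cast hn
  have hL0 : (0:ℝ) < L := by exact_mod_cast hL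
  set t : ℝ := Real.log 2 / L with htdef
  have hlog2 : 0 < Real.log 2 := Real.log_pos (by norm_num)
  have ht : 0 ≤ t := by positivity
  have htL : t * L = Real.log 2 := by rw [htdef]; field_simp
  have hexp : Real.exp (t * L) = 2 := by rw [htL, Real.exp_log]; norm_num
  have ha : (Real.exp (t * L) - 1) / L = 1 / L := by rw [hexp]; norm_num
  -- A bound
  have hA : ((univ.filter fun f : Fin n → Fin n => n ≤ Smin L f).card : ℝ)
      ≤ (n:ℝ)^n * Real.exp (-(Real.log 2 - 1/2) * n / L) := by
    have h1 := chernoff_card (n := n) ht hL n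
    rw [ha] at h1
    have h2 := prod_bound (n := n) (a := 1 / L) (by positivity) hn
    have h3 : ((univ.filter fun f : Fin n → Fin n => n ≤ Smin L f).card : ℝ) * Real.exp (t * n)
        ≤ (n:ℝ)^n * Real.exp (1 / L * n / 2) := le_trans h1 h2
    have h4 : ((univ.filter fun f : Fin n → Fin n => n ≤ Smin L f).card : ℝ)
        ≤ (n:ℝ)^n * Real.exp (1 / L * n / 2) / Real.exp (t * n) := by
      rw [le_div_iff₀ (Real.exp_pos _)]
      exact h3
    refine h4.trans ?_
    rw [div_eq_mul_inv, ← Real.exp_neg, mul_assoc, ← Real.exp_add]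
    apply mul_le_mul_of_nonneg_left _ (by positivity)
    apply le_of_eq
    rw [htdef]
    field_simp
    ring
  -- M bound
  have hM : ((univ.filter fun f : Fin n → Fin n => ∃ i, L + 1 ≤ load f i).card : ℝ)
      ≤ (n:ℝ)^(n+1) / (Nat.factorial (L+1)) := by
    have h1 := card_maxload (n := n) (L + 1)
    have h2 : ((univ.filter fun f : Fin n → Fin n => ∃ i, L + 1 ≤ load f i).card : ℝ)
        ≤ (n:ℝ) * ((n.choose (L+1) : ℝ) * (n:ℝ)^(n - (L+1))) := by
      exact_mod_cast Nat.cast_le.mpr h1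
    refine h2.trans ?_
    have hch : (n.choose (L+1) : ℝ) ≤ (n:ℝ)^(L+1) / (Nat.factorial (L+1)) := by
      exact_mod_cast Nat.choose_le_pow_div (L+1) n
    have hpow : (n:ℝ)^(L+1) * (n:ℝ)^(n - (L+1)) = (n:ℝ)^n := by
      rw [← pow_add]
      congr 1
      omega
    calc (n:ℝ) * ((n.choose (L+1) : ℝ) * (n:ℝ)^(n - (L+1)))
        ≤ (n:ℝ) * ((n:ℝ)^(L+1) / (Nat.factorial (L+1)) * (n:ℝ)^(n - (L+1))) := by
          apply mul_le_mul_of_nonneg_left _ hn0.le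
          apply mul_le_mul_of_nonneg_right hch (by positivity)
      _ = (n:ℝ)^(n+1) / (Nat.factorial (L+1)) := by
          rw [div_mul_eq_mul_div, hpow, pow_succ]
          ring
  have hsub := bad_subset (n := n) L
  have hcard : (univ.filter fun f : Fin n → Fin n => 3 * n < ∑ i, (load f i)^2).card
      ≤ (univ.filter fun f : Fin n → Fin n => n ≤ Smin L f).card
        + (univ.filter fun f : Fin n → Fin n => ∃ i, L + 1 ≤ load f i).card :=
    le_trans (Finset.card_le_card hsub) (Finset.card_union_le _ _)
  have := (Nat.cast_le (α := ℝ)).mpr hcard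
  push_cast at this
  linarith

end OC

namespace OC

lemma two_pow_le_fact : ∀ L : ℕ, 2 ^ L ≤ Nat.factorial (L + 1)
  | 0 => le_refl 1
  | (L+1) => by
    rw [pow_succ, Nat.factorial_succ]
    calc 2 ^ L * 2 ≤ Nat.factorial (L+1) * 2 :=
          Nat.mul_le_mul_right 2 (two_pow_le_fact L)
      _ ≤ Nat.factorial (L+1) * (L+1+1) := Nat.mul_le_mul_left _ (by omega)
      _ = (L+1+1) * Nat.factorial (L+1) := Nat.mul_comm _ _

set_option maxHeartbeats 1000000 in
lemma count_final (c : ℝ) (hc : 0 < c) :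
    ∃ n0 : ℕ, ∀ n : ℕ, n0 ≤ n →
    ((univ.filter fun f : Fin n → Fin n => 3 * n < ∑ i, (load f i)^2).card : ℝ)
      ≤ (n:ℝ) ^ (-c) * (n:ℝ)^n := by
  set β : ℝ := Real.log 2 - 1/2 with hβdef
  have hβ : 0 < β := by
    have := Real.log_two_gt_d9
    rw [hβdef]; linarith
  have hlog2 : 0 < Real.log 2 := Real.log_pos (by norm_num)
  have hs : Filter.Tendsto (fun n:ℕ => ((n:ℝ) ^ ((1:ℝ)/2))) Filter.atTop Filter.atTop :=
    (tendsto_rpow_atTop (by norm_num)).comp tendsto_natCast_atTop_atTop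
  have hT1 : Filter.Tendsto
      (fun n:ℕ => ((n:ℝ) ^ ((1:ℝ)/2)) ^ (2*c) * Real.exp (-β * ((n:ℝ) ^ ((1:ℝ)/2))))
      Filter.atTop (nhds 0) :=
    (tendsto_rpow_mul_exp_neg_mul_atTop_nhds_zero (2*c) β hβ).comp hs
  have hT2 : Filter.Tendsto
      (fun n:ℕ => ((n:ℝ) ^ ((1:ℝ)/2)) ^ (2*(c+1)) * Real.exp (-Real.log 2 * ((n:ℝ) ^ ((1:ℝ)/2))))
      Filter.atTop (nhds 0) :=
    (tendsto_rpow_mul_exp_neg_mul_atTop_nhds_zero (2*(c+1)) _ hlog2).comp hs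
  have hE1 := hT1.eventually_lt_const (show (0:ℝ) < 1/2 by norm_num)
  have hE2 := hT2.eventually_lt_const (show (0:ℝ) < 1/4 by norm_num)
  have hE3 : ∀ᶠ n:ℕ in Filter.atTop, 2 ≤ n := Filter.eventually_ge_atTop 2
  obtain ⟨n0, hn0⟩ := Filter.eventually_atTop.mp ((hE1.and hE2).and hE3)
  refine ⟨n0, fun n hn => ?_⟩
  obtain ⟨⟨hE1n, hE2n⟩, hn2⟩ := hn0 n hn
  set L : ℕ := Nat.sqrt n with hLdef
  have hL1 : 1 ≤ L := Nat.sqrt_pos.mpr (by omega)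
  have hLn : L + 1 ≤ n := Nat.succ_le_of_lt (Nat.sqrt_lt_self (by omega))
  have hn0' : (0:ℝ) < n := by exact_mod_cast (by omega : 0 < n)
  have hL0' : (0:ℝ) < L := by exact_mod_cast hL1
  set s : ℝ := (n:ℝ) ^ ((1:ℝ)/2) with hsdef
  have hs0 : 0 < s := Real.rpow_pos_of_pos hn0' _
  have hss : s * s = (n:ℝ) := by
    rw [hsdef, ← Real.rpow_add hn0']
    norm_num
  have hs1 : (L:ℝ) ≤ s := by
    have h1 : ((L:ℝ))^2 ≤ (n:ℝ) := by exact_mod_cast Nat.sqrt_le' n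
    nlinarith [hs0, hL0']
  have hs2 : s ≤ (L:ℝ) + 1 := by
    have h1 : (n:ℝ) ≤ ((L:ℝ)+1)^2 := by exact_mod_cast (Nat.lt_succ_sqrt' n).le
    nlinarith [hs0, hL0']
  have hsc : s ^ (2*c) = (n:ℝ) ^ c := by
    rw [hsdef, ← Real.rpow_mul hn0'.le]
    congr 1
    ring
  have hsc1 : s ^ (2*(c+1)) = (n:ℝ) ^ (c+1) := by
    rw [hsdef, ← Real.rpow_mul hn0'.le]
    congr 1
    ring
  have hrc : (n:ℝ) ^ (-c) = ((n:ℝ) ^ c)⁻¹ := Real.rpow_neg hn0'.le c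
  have hncpos : 0 < (n:ℝ) ^ c := Real.rpow_pos_of_pos hn0' c
  -- step 1 : exp(-β s) ≤ 1/2 * n^(-c)
  have step1 : Real.exp (-β * s) ≤ 1/2 * (n:ℝ) ^ (-c) := by
    have h1 : (n:ℝ) ^ c * Real.exp (-β * s) ≤ 1/2 := by
      rw [← hsc]; exact hE1n.le
    have h2 : Real.exp (-β * s) ≤ (1/2) / ((n:ℝ) ^ c) := by
      rw [le_div_iff₀ hncpos]
      nlinarith [h1]
    rw [hrc]
    calc Real.exp (-β * s) ≤ (1/2) / ((n:ℝ) ^ c) := h2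
      _ = 1/2 * ((n:ℝ) ^ c)⁻¹ := by rw [div_eq_mul_inv]
  -- step 2 : 2 * n * exp(-log 2 * s) ≤ 1/2 * n^(-c)
  have step2 : 2 * (n:ℝ) * Real.exp (-Real.log 2 * s) ≤ 1/2 * (n:ℝ) ^ (-c) := by
    have h1 : (n:ℝ) ^ (c+1) * Real.exp (-Real.log 2 * s) ≤ 1/4 := by
      rw [← hsc1]; exact hE2n.le
    have h2 : (n:ℝ) ^ (c+1) = (n:ℝ) ^ c * (n:ℝ) := by
      rw [Real.rpow_add hn0', Real.rpow_one]
    rw [h2] at h1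
    have h3 : 2 * (n:ℝ) * Real.exp (-Real.log 2 * s) ≤ (1/2) / ((n:ℝ) ^ c) := by
      rw [le_div_iff₀ hncpos]
      nlinarith [h1]
    rw [hrc]
    calc 2 * (n:ℝ) * Real.exp (-Real.log 2 * s) ≤ (1/2) / ((n:ℝ) ^ c) := h3
      _ = 1/2 * ((n:ℝ) ^ c)⁻¹ := by rw [div_eq_mul_inv]
  -- combine with count_bad
  refine (count_bad hL1 hLn).trans ?_
  have hnn : (0:ℝ) ≤ (n:ℝ)^n := by positivity
  have term1 : (n:ℝ)^n * Real.exp (-(Real.log 2 - 1/2) * n / L)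
      ≤ (n:ℝ)^n * (1/2 * (n:ℝ) ^ (-c)) := by
    apply mul_le_mul_of_nonneg_left _ hnn
    refine le_trans ?_ step1
    apply Real.exp_le_exp.mpr
    rw [div_le_iff₀ hL0']
    have h2 : s * (L:ℝ) ≤ (n:ℝ) := by
      calc s * (L:ℝ) ≤ s * s := mul_le_mul_of_nonneg_left hs1 hs0.le
        _ = n := hss
    have h3 : β * (s * L) ≤ β * n := mul_le_mul_of_nonneg_left h2 hβ.le
    calc -(Real.log 2 - 1/2) * (n:ℝ) = -(β * n) := by rw [← hβdef]; ring
      _ ≤ -(β * (s * L)) := neg_le_neg h3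
      _ = -β * s * L := by ring
  have term2 : (n:ℝ)^(n+1) / (Nat.factorial (L+1))
      ≤ (n:ℝ)^n * (1/2 * (n:ℝ) ^ (-c)) := by
    have hfac : (2:ℝ)^L ≤ (Nat.factorial (L+1) : ℝ) := by
      exact_mod_cast two_pow_le_fact L
    have h2L : (2:ℝ)^L = Real.exp (L * Real.log 2) := by
      rw [Real.exp_nat_mul, Real.exp_log (show (0:ℝ) < 2 by norm_num)]
    have hfacpos : (0:ℝ) < (Nat.factorial (L+1) : ℝ) := by
      exact_mod_cast Nat.factorial_pos (L+1)
    calc (n:ℝ)^(n+1) / (Nat.factorial (L+1))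
        ≤ (n:ℝ)^(n+1) / (2:ℝ)^L := by
          apply div_le_div_of_nonneg_left (by positivity) (by positivity) hfac
      _ = (n:ℝ)^(n+1) * Real.exp (-(L * Real.log 2)) := by
          rw [h2L, Real.exp_neg, div_eq_mul_inv]
      _ ≤ (n:ℝ)^(n+1) * Real.exp (-((s - 1) * Real.log 2)) := by
          apply mul_le_mul_of_nonneg_left _ (by positivity)
          apply Real.exp_le_exp.mpr
          have : s - 1 ≤ (L:ℝ) := by linarith [hs2]
          nlinarith [hlog2]
      _ = (n:ℝ)^n * (2 * (n:ℝ) * Real.exp (-Real.log 2 * s)) := by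
          rw [pow_succ]
          have : Real.exp (-((s - 1) * Real.log 2))
              = Real.exp (Real.log 2) * Real.exp (-Real.log 2 * s) := by
            rw [← Real.exp_add]; congr 1; ring
          rw [this, Real.exp_log (show (0:ℝ) < 2 by norm_num)]
          ring
      _ ≤ (n:ℝ)^n * (1/2 * (n:ℝ) ^ (-c)) := by
          apply mul_le_mul_of_nonneg_left step2 hnn
  calc (n:ℝ)^n * Real.exp (-(Real.log 2 - 1/2) * n / L) + (n:ℝ)^(n+1) / (Nat.factorial (L+1))
      ≤ (n:ℝ)^n * (1/2 * (n:ℝ) ^ (-c)) + (n:ℝ)^n * (1/2 * (n:ℝ) ^ (-c)) := by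
        exact add_le_add term1 term2
    _ = (n:ℝ) ^ (-c) * (n:ℝ)^n := by ring

end OC


/-- **Lemma A.1 (OneChoice quadratic potential).** Allocate `n` balls into `n` bins,
each ball into a bin chosen independently and uniformly at random, and let
`Υ = ∑_i x_i²` be the quadratic potential of the resulting load vector. Then for every
constant `c > 0` and all sufficiently large `n`, `Υ ≤ 3n` holds with probability at
least `1 - n^{-c}`. -/
theorem one_choice_quadratic_potential :
    ∀ c : ℝ, 0 < c →
    ∃ n0 : ℕ, ∀ n : ℕ, n0 ≤ n →
    ∀ (Ω : Type) [inst : MeasurableSpace Ω] (P : Measure Ω) [IsProbabilityMeasure P]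
      (Z : Fin n → Ω → Fin n),
      (∀ j, Measurable (Z j)) →
      iIndepFun Z P →
      (∀ j i, P {ω | Z j ω = i} = (n : ℝ≥0∞)⁻¹) →
      P {ω | (∑ i : Fin n, ((Finset.univ.filter fun j => Z j ω = i).card) ^ 2) ≤ 3 * n}
        ≥ ENNReal.ofReal (1 - (n : ℝ) ^ (-c)) := by
  intro c hc
  obtain ⟨n0, hcount⟩ := OC.count_final c hc
  refine ⟨max n0 2, fun n hn Ω inst P instP Z hZ hindep hunif => ?_⟩
  have hn0 : n0 ≤ n := le_trans (le_max_left _ _) hn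
  have hn2 : 2 ≤ n := le_trans (le_max_right _ _) hn
  classical
  set G : Finset (Fin n → Fin n) :=
    univ.filter (fun f => (∑ i, (OC.load f i)^2) ≤ 3 * n) with hG
  set cell : (Fin n → Fin n) → Set Ω := fun f => ⋂ j, Z j ⁻¹' {f j} with hcell
  -- the event as a union of cells
  have hEset : {ω | (∑ i : Fin n, ((Finset.univ.filter fun j => Z j ω = i).card) ^ 2) ≤ 3 * n}
      = ⋃ f ∈ G, cell f := by
    ext ω
    simp only [Set.mem_setOf_eq, Set.mem_iUnion, hcell, Set.mem_iInter, Set.mem_preimage,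
      Set.mem_singleton_iff]
    constructor
    · intro h
      refine ⟨fun j => Z j ω, ?_, fun j => rfl⟩
      rw [hG]
      exact Finset.mem_filter.mpr ⟨Finset.mem_univ _, h⟩
    · rintro ⟨f, hf, hfe⟩
      have hload : ∀ i, (Finset.univ.filter fun j => Z j ω = i).card = OC.load f i := by
        intro i
        unfold OC.load
        congr 1
        apply Finset.filter_congr
        intro j _
        rw [hfe j]
      have hf2 := (Finset.mem_filter.mp hf).2
      calc (∑ i : Fin n, ((Finset.univ.filter fun j => Z j ω = i).card) ^ 2)
          = ∑ i, (OC.load f i)^2 := Finset.sum_congr rfl fun i _ => by rw [hload i]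
        _ ≤ 3 * n := hf2
  -- measure of each cell
  have hcellP : ∀ f : Fin n → Fin n, P (cell f) = ((n:ℝ≥0∞)⁻¹)^n := by
    intro f
    have h1 : cell f = ⋂ j ∈ (univ : Finset (Fin n)), Z j ⁻¹' {f j} := by
      rw [hcell]; simp
    rw [h1, hindep.measure_inter_preimage_eq_mul univ
      (fun j _ => measurableSet_singleton (f j))]
    have h2 : ∀ j, P (Z j ⁻¹' {f j}) = (n : ℝ≥0∞)⁻¹ := by
      intro j
      have : Z j ⁻¹' {f j} = {ω | Z j ω = f j} := by ext ω; simp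
      rw [this, hunif j (f j)]
    rw [Finset.prod_congr rfl (fun j _ => h2 j), Finset.prod_const, Finset.card_univ,
      Fintype.card_fin]
  -- cells are measurable and disjoint
  have hmeas : ∀ f : Fin n → Fin n, MeasurableSet (cell f) := by
    intro f
    rw [hcell]
    exact MeasurableSet.iInter fun j => hZ j (measurableSet_singleton (f j))
  have hdisj : (↑G : Set (Fin n → Fin n)).PairwiseDisjoint cell := by
    intro f _ g _ hfg
    refine Set.disjoint_left.mpr fun ω hωf hωg => hfg ?_
    funext j
    have h1 : Z j ω = f j := by
      have := Set.mem_iInter.mp hωf j; simpa using this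
    have h2 : Z j ω = g j := by
      have := Set.mem_iInter.mp hωg j; simpa using this
    rw [← h1, h2]
  -- compute the probability
  have hPE : P {ω | (∑ i : Fin n, ((Finset.univ.filter fun j => Z j ω = i).card) ^ 2) ≤ 3 * n}
      = (G.card : ℝ≥0∞) * ((n:ℝ≥0∞)⁻¹)^n := by
    rw [hEset, measure_biUnion_finset hdisj (fun f _ => hmeas f)]
    rw [Finset.sum_congr rfl (fun f _ => hcellP f), Finset.sum_const, nsmul_eq_mul]
  rw [hPE]
  -- number crunching
  have hn1 : (0:ℝ) < n := by exact_mod_cast (by omega : 0 < n)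
  have hnn : (0:ℝ) < (n:ℝ)^n := by positivity
  have hcard : G.card + (univ.filter fun f : Fin n → Fin n => 3 * n < ∑ i, (OC.load f i)^2).card
      = n^n := by
    have h1 := Finset.card_filter_add_card_filter_not
      (s := (univ : Finset (Fin n → Fin n))) (p := fun f => (∑ i, (OC.load f i)^2) ≤ 3 * n)
    rw [hG]
    have h2 : (univ.filter fun f : Fin n → Fin n => ¬ (∑ i, (OC.load f i)^2) ≤ 3 * n)
        = (univ.filter fun f : Fin n → Fin n => 3 * n < ∑ i, (OC.load f i)^2) := by
      apply Finset.filter_congr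
      intro f _
      simp [Nat.not_le]
    rw [h2] at h1
    rw [h1, Finset.card_univ]
    simp [Fintype.card_fun]
  have hGreal : (1 - (n:ℝ) ^ (-c)) * (n:ℝ)^n ≤ (G.card : ℝ) := by
    have hbad := hcount n hn0
    have h1 : (G.card : ℝ) = (n:ℝ)^n -
        ((univ.filter fun f : Fin n → Fin n => 3 * n < ∑ i, (OC.load f i)^2).card : ℝ) := by
      have := congrArg (fun k : ℕ => (k : ℝ)) hcard
      push_cast at this
      linarith
    rw [h1]
    nlinarith [hbad]
  -- convert to ENNReal
  have hofReal : (G.card : ℝ≥0∞) * ((n:ℝ≥0∞)⁻¹)^n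
      = ENNReal.ofReal ((G.card : ℝ) * ((n:ℝ)⁻¹)^n) := by
    rw [ENNReal.ofReal_mul (by positivity), ENNReal.ofReal_natCast,
      ENNReal.ofReal_pow (by positivity), ENNReal.ofReal_inv_of_pos hn1,
      ENNReal.ofReal_natCast]
  rw [hofReal]
  apply ENNReal.ofReal_le_ofReal
  have : ((n:ℝ)⁻¹)^n = ((n:ℝ)^n)⁻¹ := by rw [inv_pow]
  rw [this]
  have h2 := mul_le_mul_of_nonneg_right hGreal (by positivity : (0:ℝ) ≤ ((n:ℝ)^n)⁻¹)
  calc 1 - (n:ℝ)^(-c) = (1 - (n:ℝ)^(-c)) * (n:ℝ)^n * ((n:ℝ)^n)⁻¹ := by field_simp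
    _ ≤ (G.card:ℝ) * ((n:ℝ)^n)⁻¹ := h2
end
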